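/- In a braided rigid monoidal category, the Drinfel'd morphism u_X : X → X^{★★}, defined as the composite (up to unitors/associators) (id ⊗ coev_{X^★}) ≫ (β_{X,X^★} ⊗ id) ≫ (ev_X ⊗ id) appropriately rebracketed, is an isomorphism natural in X. -/

import Mathlib

open CategoryTheory MonoidalCategory

variable {C : Type*} [Category C] [MonoidalCategory C] [BraidedCategory C]
  [RightRigidCategory C]

/-- The Drinfel'd morphism `u_X : X ⟶ Xᘁᘁ` of a braided rigid monoidal category, built from
the coevaluation of `Xᘁ`, the braiding `β_{X,Xᘁ}` and the evaluation of `X`. -/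
noncomputable def drinfeldMorphism (X : C) : X ⟶ (((Xᘁ : C))ᘁ : C) :=
  (ρ_ X).inv ≫ (X ◁ η_ (Xᘁ : C) (((Xᘁ : C))ᘁ)) ≫
    (α_ X (Xᘁ : C) (((Xᘁ : C))ᘁ : C)).inv ≫
      ((β_ X (Xᘁ : C)).hom ▷ (((Xᘁ : C))ᘁ : C)) ≫
        (ε_ X (Xᘁ) ▷ (((Xᘁ : C))ᘁ : C)) ≫ (λ_ (((Xᘁ : C))ᘁ : C)).hom

/-- The "swapped" right-dual structure on `Xᘁ`, with right dual `X`, via the braiding. -/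
@[reducible]
noncomputable def swapInst (X : C) : HasRightDual (Xᘁ : C) where
  rightDual := X
  exact := BraidedCategory.exactPairing_swap X (Xᘁ)

lemma drinfeld_eq_mate (X : C) :
    drinfeldMorphism X =
      @rightAdjointMate C _ _ (Xᘁ) (Xᘁ) inferInstance (swapInst X) (𝟙 (Xᘁ : C)) := by
  dsimp [drinfeldMorphism, rightAdjointMate, swapInst, BraidedCategory.exactPairing_swap,
    ExactPairing.evaluation, ExactPairing.coevaluation]
  have e1 : @ExactPairing.evaluation' C _ _ (Xᘁ : C) X (BraidedCategory.exactPairing_swap X (Xᘁ))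
      = (β_ X (Xᘁ : C)).hom ≫ ε_ X (Xᘁ) := rfl
  rw [e1]
  simp
  rfl

lemma mate_swap {X Y : C} (f : X ⟶ Y) :
    @rightAdjointMate C _ _ (Yᘁ) (Xᘁ) (swapInst Y) (swapInst X) (fᘁ) = f := by
  have h : (η_ Y (Yᘁ) ≫ (β_ (Yᘁ : C) Y).inv) ≫ (fᘁ) ▷ Y
      = (η_ X (Xᘁ) ≫ (β_ (Xᘁ : C) X).inv) ≫ (Xᘁ : C) ◁ f := by
    simp only [Category.assoc]
    rw [← BraidedCategory.braiding_inv_naturality_right,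
      coevaluation_comp_rightAdjointMate_assoc,
      BraidedCategory.braiding_inv_naturality_left]
  have hz := @ExactPairing.coevaluation_evaluation' C _ _ (Xᘁ : C) X
    (BraidedCategory.exactPairing_swap X (Xᘁ))
  have e1 : @ExactPairing.evaluation' C _ _ (Xᘁ : C) X (BraidedCategory.exactPairing_swap X (Xᘁ))
      = (β_ X (Xᘁ : C)).hom ≫ ε_ X (Xᘁ) := rfl
  have e2 : @ExactPairing.coevaluation' C _ _ (Xᘁ : C) X (BraidedCategory.exactPairing_swap X (Xᘁ))
      = η_ X (Xᘁ) ≫ (β_ (Xᘁ : C) X).inv := rfl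
  rw [e1, e2] at hz
  calc
    @rightAdjointMate C _ _ (Yᘁ) (Xᘁ) (swapInst Y) (swapInst X) (fᘁ)
        = (ρ_ X).inv ≫ X ◁ (η_ Y (Yᘁ) ≫ (β_ (Yᘁ : C) Y).inv) ≫ X ◁ ((fᘁ) ▷ Y) ≫
            (α_ X (Xᘁ : C) Y).inv ≫ ((β_ X (Xᘁ : C)).hom ≫ ε_ X (Xᘁ)) ▷ Y ≫ (λ_ Y).hom := rfl
    _ = (ρ_ X).inv ≫ X ◁ (η_ X (Xᘁ) ≫ (β_ (Xᘁ : C) X).inv) ≫ X ◁ ((Xᘁ : C) ◁ f) ≫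
            (α_ X (Xᘁ : C) Y).inv ≫ ((β_ X (Xᘁ : C)).hom ≫ ε_ X (Xᘁ)) ▷ Y ≫ (λ_ Y).hom := by
      rw [← MonoidalCategory.whiskerLeft_comp_assoc, h, MonoidalCategory.whiskerLeft_comp_assoc]
    _ = (ρ_ X).inv ≫ (X ◁ (η_ X (Xᘁ) ≫ (β_ (Xᘁ : C) X).inv) ≫
            (α_ X (Xᘁ : C) X).inv ≫ ((β_ X (Xᘁ : C)).hom ≫ ε_ X (Xᘁ)) ▷ X) ≫
              (λ_ X).hom ≫ f := by
      simp only [MonoidalCategory.whiskerLeft_comp, Category.assoc]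
      rw [associator_inv_naturality_right_assoc, whisker_exchange_assoc]
      simp
    _ = f := by rw [hz]; simp

/-- In a braided rigid monoidal category, the Drinfel'd morphism `u_X : X ⟶ Xᘁᘁ` is an
isomorphism natural in `X`. -/
theorem drinfeldMorphism_isIso_and_natural :
    (∀ X : C, IsIso (drinfeldMorphism X)) ∧
    (∀ {X Y : C} (f : X ⟶ Y),
      f ≫ drinfeldMorphism Y = drinfeldMorphism X ≫ ((fᘁ)ᘁ)) := by
  constructor
  · intro X
    rw [drinfeld_eq_mate]
    refine ⟨@rightAdjointMate C _ _ (Xᘁ) (Xᘁ) (swapInst X) inferInstance (𝟙 (Xᘁ : C)), ?_, ?_⟩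
    · rw [← @comp_rightAdjointMate C _ _ (Xᘁ) (Xᘁ) (Xᘁ) (swapInst X) inferInstance (swapInst X)
        (𝟙 _) (𝟙 _), Category.comp_id, @rightAdjointMate_id C _ _ (Xᘁ) (swapInst X)]
      rfl
    · rw [← @comp_rightAdjointMate C _ _ (Xᘁ) (Xᘁ) (Xᘁ) inferInstance (swapInst X) inferInstance
        (𝟙 _) (𝟙 _), Category.comp_id, @rightAdjointMate_id C _ _ (Xᘁ) inferInstance]
  · intro X Y f
    have h1 : @rightAdjointMate C _ _ (Yᘁ) (Xᘁ) inferInstance (swapInst X) ((fᘁ) ≫ 𝟙 (Xᘁ : C))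
        = @rightAdjointMate C _ _ (Xᘁ) (Xᘁ) inferInstance (swapInst X) (𝟙 (Xᘁ : C)) ≫ ((fᘁ)ᘁ) :=
      @comp_rightAdjointMate C _ _ (Yᘁ) (Xᘁ) (Xᘁ) inferInstance inferInstance (swapInst X)
        (fᘁ) (𝟙 _)
    have h2 : @rightAdjointMate C _ _ (Yᘁ) (Xᘁ) inferInstance (swapInst X) (𝟙 (Yᘁ : C) ≫ (fᘁ))
        = @rightAdjointMate C _ _ (Yᘁ) (Xᘁ) (swapInst Y) (swapInst X) (fᘁ) ≫
            @rightAdjointMate C _ _ (Yᘁ) (Yᘁ) inferInstance (swapInst Y) (𝟙 (Yᘁ : C)) :=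
      @comp_rightAdjointMate C _ _ (Yᘁ) (Yᘁ) (Xᘁ) inferInstance (swapInst Y) (swapInst X)
        (𝟙 _) (fᘁ)
    rw [Category.comp_id] at h1
    rw [Category.id_comp, mate_swap] at h2
    rw [drinfeld_eq_mate, drinfeld_eq_mate, ← h1, ← h2]
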